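/- Suppose σσᵀ = λ g R⁻¹ gᵀ for a constant λ > 0, and let J = -λ log ξ for a positive, sufficiently smooth function ξ. Then J satisfies the nonlinear HJB equation -∂_t J = -(1/2)(∂_x J)ᵀ g R⁻¹ gᵀ ∂_x J + V + fᵀ∂_x J + (1/2)Tr(σσᵀ ∂²_x J) if and only if ξ satisfies the linear PDE ∂_t ξ = (V/λ)ξ - fᵀ∂_x ξ - (1/2)Tr(σσᵀ ∂²_x ξ). -/

import Mathlib

open Matrix

/-- Spatial gradient of a scalar field on ℝⁿ, as a column vector. -/
noncomputable def grad {n : ℕ} (f : (Fin n → ℝ) → ℝ) (x : Fin n → ℝ) : Fin n → ℝ :=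
  fun i => fderiv ℝ f x (Pi.single i 1)

/-- Spatial Hessian of a scalar field on ℝⁿ, as a matrix. -/
noncomputable def hess {n : ℕ} (f : (Fin n → ℝ) → ℝ) (x : Fin n → ℝ) :
    Matrix (Fin n) (Fin n) ℝ :=
  Matrix.of fun i j =>
    fderiv ℝ (fun y => fderiv ℝ f y (Pi.single j 1)) x (Pi.single i 1)

lemma trace_mul_vecMulVec' {n : ℕ} (A : Matrix (Fin n) (Fin n) ℝ) (u v : Fin n → ℝ) :
    Matrix.trace (A * Matrix.vecMulVec u v) = v ⬝ᵥ A.mulVec u := by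
  simp [Matrix.trace, Matrix.diag, Matrix.mul_apply, Matrix.vecMulVec_apply,
    dotProduct, Matrix.mulVec, Finset.mul_sum]
  apply Finset.sum_congr rfl; intros; apply Finset.sum_congr rfl; intros; ring

/-- Under the condition σσᵀ = λ g R⁻¹ gᵀ (λ > 0) and the Cole–Hopf transform
J = -λ log ξ (ξ > 0 smooth), J solves the nonlinear HJB equation iff ξ solves
the corresponding linear PDE. -/
theorem stmt3 {n m k : ℕ}
    (f : (Fin n → ℝ) → ℝ → (Fin n → ℝ))
    (g : (Fin n → ℝ) → ℝ → Matrix (Fin n) (Fin m) ℝ)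
    (σ : (Fin n → ℝ) → ℝ → Matrix (Fin n) (Fin k) ℝ)
    (V : (Fin n → ℝ) → ℝ → ℝ)
    (R : (Fin n → ℝ) → ℝ → Matrix (Fin m) (Fin m) ℝ)
    (hR : ∀ x t, (R x t).PosDef) (hRsymm : ∀ x t, (R x t).IsSymm)
    (lam : ℝ) (hlam : 0 < lam)
    (hcond : ∀ x t, σ x t * (σ x t)ᵀ = lam • (g x t * (R x t)⁻¹ * (g x t)ᵀ))
    (ξ : (Fin n → ℝ) → ℝ → ℝ) (hpos : ∀ x t, 0 < ξ x t)
    (hξx : ∀ t, ContDiff ℝ 2 (fun x => ξ x t))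
    (hξt : ∀ x, ContDiff ℝ 1 (ξ x))
    (J : (Fin n → ℝ) → ℝ → ℝ)
    (hJ : J = fun x t => -lam * Real.log (ξ x t)) :
    ∀ (x : Fin n → ℝ) (t : ℝ),
      (-(deriv (J x) t)
          = -(1/2) * ((grad (fun y => J y t) x) ⬝ᵥ
                (g x t * (R x t)⁻¹ * (g x t)ᵀ).mulVec (grad (fun y => J y t) x))
            + V x t
            + (f x t ⬝ᵥ grad (fun y => J y t) x)
            + (1/2) * Matrix.trace (σ x t * (σ x t)ᵀ * hess (fun y => J y t) x))
      ↔
      (deriv (ξ x) t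
          = (V x t / lam) * ξ x t
            - (f x t ⬝ᵥ grad (fun y => ξ y t) x)
            - (1/2) * Matrix.trace (σ x t * (σ x t)ᵀ * hess (fun y => ξ y t) x)) := by
  subst hJ
  intro x t
  have hsne : ξ x t ≠ 0 := (hpos x t).ne'
  have hφ : ContDiff ℝ 2 (fun y => ξ y t) := hξx t
  have hφdiff : Differentiable ℝ (fun y => ξ y t) := hφ.differentiable (by norm_num)
  have hdt : HasDerivAt (ξ x) (deriv (ξ x) t) t :=
    (((hξt x).differentiable one_ne_zero) t).hasDerivAt
  have hJt : deriv (fun s => -lam * Real.log (ξ x s)) t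
      = -lam * (deriv (ξ x) t / ξ x t) := ((hdt.log hsne).const_mul (-lam)).deriv
  have hfd : ∀ y, fderiv ℝ (fun z => -lam * Real.log (ξ z t)) y
      = (-lam * (ξ y t)⁻¹) • fderiv ℝ (fun z => ξ z t) y := by
    intro y
    have h1 : HasFDerivAt (fun z => ξ z t) (fderiv ℝ (fun z => ξ z t) y) y :=
      (hφdiff y).hasFDerivAt
    have h2 := (h1.log (hpos y t).ne').const_mul (-lam)
    rw [h2.fderiv, smul_smul]
  have hgJ : grad (fun y => -lam * Real.log (ξ y t)) x
      = (-lam * (ξ x t)⁻¹) • grad (fun y => ξ y t) x := by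
    funext i
    simp only [grad, hfd x, ContinuousLinearMap.coe_smul', Pi.smul_apply, smul_eq_mul]
  have hhJ : hess (fun y => -lam * Real.log (ξ y t)) x
      = (-lam * (ξ x t)⁻¹) • hess (fun y => ξ y t) x
        + (lam * ((ξ x t)^2)⁻¹) • Matrix.vecMulVec (grad (fun y => ξ y t) x)
            (grad (fun y => ξ y t) x) := by
    ext i j
    have hrw : (fun y => fderiv ℝ (fun z => -lam * Real.log (ξ z t)) y (Pi.single j 1))
        = fun y => -lam * ((ξ y t)⁻¹ * fderiv ℝ (fun z => ξ z t) y (Pi.single j 1)) := by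
      funext y; rw [hfd y]; simp [mul_assoc]
    have hD1 : ContDiff ℝ 1 (fderiv ℝ (fun z => ξ z t)) := hφ.fderiv_right (by norm_num)
    have hDj : DifferentiableAt ℝ (fun y => fderiv ℝ (fun z => ξ z t) y (Pi.single j 1)) x :=
      (hD1.differentiable one_ne_zero x).clm_apply (differentiableAt_const _)
    have hDjH := hDj.hasFDerivAt
    have hinv : HasFDerivAt (fun y => (ξ y t)⁻¹)
        ((-((ξ x t)^2)⁻¹) • fderiv ℝ (fun z => ξ z t) x) x :=
      (hasDerivAt_inv hsne).comp_hasFDerivAt x (hφdiff x).hasFDerivAt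
    have hmul : HasFDerivAt (fun y => -lam * ((ξ y t)⁻¹ * fderiv ℝ (fun z => ξ z t) y (Pi.single j 1))) _ x :=
      (hinv.mul hDjH).const_mul (-lam)
    simp only [hess, Matrix.of_apply]
    rw [hrw, hmul.fderiv]
    simp only [ContinuousLinearMap.coe_smul', Pi.smul_apply, ContinuousLinearMap.add_apply,
      smul_eq_mul, Matrix.add_apply, Matrix.smul_apply, Matrix.vecMulVec_apply, grad, hess,
      Matrix.of_apply]
    ring
  have hquad : grad (fun y => ξ y t) x ⬝ᵥ
      (σ x t * (σ x t)ᵀ).mulVec (grad (fun y => ξ y t) x)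
      = lam * (grad (fun y => ξ y t) x ⬝ᵥ
          (g x t * (R x t)⁻¹ * (g x t)ᵀ).mulVec (grad (fun y => ξ y t) x)) := by
    rw [hcond x t, Matrix.smul_mulVec, dotProduct_smul, smul_eq_mul]
  rw [hJt, hgJ, hhJ, Matrix.mulVec_smul, smul_dotProduct, dotProduct_smul,
    dotProduct_smul, Matrix.mul_add, Matrix.mul_smul, Matrix.mul_smul,
    Matrix.trace_add, Matrix.trace_smul, Matrix.trace_smul, trace_mul_vecMulVec', hquad]
  set s := ξ x t with hs
  set d := deriv (ξ x) t
  set F := f x t ⬝ᵥ grad (fun y => ξ y t) x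
  set T := Matrix.trace (σ x t * (σ x t)ᵀ * hess (fun y => ξ y t) x)
  set Q := grad (fun y => ξ y t) x ⬝ᵥ
      (g x t * (R x t)⁻¹ * (g x t)ᵀ).mulVec (grad (fun y => ξ y t) x)
  have hC : (lam/s) ≠ 0 := div_ne_zero hlam.ne' hsne
  have eL : -(-lam * (d / s)) = (lam/s) * d := by ring
  have eR : -(1/2) * ((-lam*s⁻¹) • ((-lam*s⁻¹) • Q)) + V x t + (-lam*s⁻¹) • F
        + (1/2) * ((-lam*s⁻¹) • T + (lam*(s^2)⁻¹) • (lam * Q))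
      = (lam/s) * ((V x t / lam) * s - F - (1/2)*T) := by
    simp only [smul_eq_mul]
    field_simp
    ring
  rw [eL, eR, mul_right_injective₀ hC |>.eq_iff]
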